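/- For every triangle Δ in ℝ² with vertices A, B, C (not collinear), the perimeter satisfies L(Δ) ≥ 2√3 · δ(Δ), where δ(Δ) is the minimax invariant of the boundary of Δ; equality holds if and only if Δ is equilateral. -/

import Mathlib

variable {E : Type*} [NormedAddCommGroup E] [InnerProductSpace ℝ E]

/-- convexity bound: distance to a point of a segment is at most max of distances to endpoints -/
lemma seg_dist_le (p X Y q : E) (hq : q ∈ segment ℝ X Y) :
    dist p q ≤ max (dist p X) (dist p Y) := by
  obtain ⟨a, b, ha, hb, hab, rfl⟩ := hq
  have h : p - (a • X + b • Y) = a • (p - X) + b • (p - Y) := by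
    have hb1 : b = 1 - a := by linarith
    subst hb1; module
  rw [dist_eq_norm, h]
  calc ‖a • (p - X) + b • (p - Y)‖ ≤ ‖a • (p - X)‖ + ‖b • (p - Y)‖ := norm_add_le _ _
    _ = a * ‖p - X‖ + b * ‖p - Y‖ := by
        rw [norm_smul, norm_smul, Real.norm_of_nonneg ha, Real.norm_of_nonneg hb]
    _ ≤ a * max (dist p X) (dist p Y) + b * max (dist p X) (dist p Y) := by
        gcongr
        · exact (dist_eq_norm p X ▸ le_max_left _ _)
        · exact (dist_eq_norm p Y ▸ le_max_right _ _)
    _ = max (dist p X) (dist p Y) := by rw [← add_mul, hab, one_mul]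

/-- median length formula -/
lemma median_sq (X Y Z : E) :
    4 * dist X (midpoint ℝ Y Z) ^ 2 = 2 * dist X Y ^ 2 + 2 * dist X Z ^ 2 - dist Y Z ^ 2 := by
  have hpar := parallelogram_law_with_norm ℝ (X - Y) (X - Z)
  have h1 : X - Y + (X - Z) = (2:ℝ) • (X - midpoint ℝ Y Z) := by
    rw [midpoint_eq_smul_add, smul_sub, smul_smul]
    norm_num
    module
  have h2 : X - Y - (X - Z) = Z - Y := by abel
  rw [h1, h2, norm_smul] at hpar
  simp only [dist_eq_norm]
  have : ‖Z - Y‖ = ‖Y - Z‖ := by rw [← neg_sub, norm_neg]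
  rw [this, Real.norm_ofNat] at hpar
  nlinarith [hpar]

/-- distance from a point on one side of an equilateral triangle to the opposite vertex -/
lemma equilateral_opp (X Y Z : E) (d : ℝ) (h1 : dist X Y = d) (h2 : dist Y Z = d)
    (h3 : dist Z X = d) (p : E) (hp : p ∈ segment ℝ X Y) :
    Real.sqrt 3 / 2 * d ≤ dist p Z := by
  have hd : 0 ≤ d := h1 ▸ dist_nonneg
  obtain ⟨a, b, ha, hb, hab, rfl⟩ := hp
  have hsplit : a • X + b • Y - Z = a • (X - Z) + b • (Y - Z) := by
    have hb1 : b = 1 - a := by linarith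
    subst hb1; module
  have hXZ : ‖X - Z‖ = d := by rw [← dist_eq_norm, dist_comm]; exact h3
  have hYZ : ‖Y - Z‖ = d := by rw [← dist_eq_norm]; exact h2
  have hXY : ‖X - Y‖ = d := by rw [← dist_eq_norm]; exact h1
  have hinner : inner ℝ (X - Z) (Y - Z) = d ^ 2 / 2 := by
    have hsub : X - Z - (Y - Z) = X - Y := by abel
    have := norm_sub_sq_real (X - Z) (Y - Z)
    rw [hsub, hXZ, hYZ, hXY] at this
    linarith
  have hsq : (dist (a • X + b • Y) Z) ^ 2 = (a^2 + a*b + b^2) * d^2 := by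
    rw [dist_eq_norm, hsplit]
    have := norm_add_sq_real (a • (X - Z)) (b • (Y - Z))
    rw [norm_smul, norm_smul, real_inner_smul_left, real_inner_smul_right, hinner,
      hXZ, hYZ, Real.norm_of_nonneg ha, Real.norm_of_nonneg hb] at this
    rw [this]; ring
  have key : (Real.sqrt 3 / 2 * d) ^ 2 ≤ (dist (a • X + b • Y) Z) ^ 2 := by
    rw [hsq, mul_pow, div_pow, Real.sq_sqrt (by norm_num : (0:ℝ) ≤ 3)]
    have hval : (a^2 + a*b + b^2) * d^2 - 3/2^2*d^2 = (a-b)^2*d^2/4 := by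
      linear_combination (3/4*(a+b+1)*d^2) * hab
    linarith [hval, mul_nonneg (sq_nonneg (a - b)) (sq_nonneg d)]
  have h0 : 0 ≤ Real.sqrt 3 / 2 * d := by positivity
  calc Real.sqrt 3 / 2 * d = Real.sqrt ((Real.sqrt 3 / 2 * d)^2) := (Real.sqrt_sq h0).symm
    _ ≤ Real.sqrt ((dist (a • X + b • Y) Z)^2) := Real.sqrt_le_sqrt key
    _ = dist (a • X + b • Y) Z := Real.sqrt_sq dist_nonneg

lemma alg_le (a b c : ℝ) (hb : 0 ≤ b) (hc : 0 ≤ c) (hab : b ≤ a) (hac : c ≤ a)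
    (htri : a ≤ b + c) : 3 * (2*b^2 + 2*c^2 - a^2) ≤ (a+b+c)^2 := by
  nlinarith [sq_nonneg (a-b), sq_nonneg (a-c), mul_nonneg (sub_nonneg.2 hab) (sub_nonneg.2 hac),
    mul_nonneg (by linarith : (0:ℝ) ≤ b + c - a) (sub_nonneg.2 hab),
    mul_nonneg (by linarith : (0:ℝ) ≤ b + c - a) (sub_nonneg.2 hac)]

lemma alg_lt (a b c : ℝ) (hb : 0 ≤ b) (hc : 0 ≤ c) (hab : b ≤ a) (hac : c ≤ a)
    (htri : a ≤ b + c) (hne : ¬(a = b ∧ b = c)) :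
    3 * (2*b^2 + 2*c^2 - a^2) < (a+b+c)^2 := by
  have hst : 0 < (a - b) + (a - c) := by
    rcases eq_or_lt_of_le hab with h | h
    · rcases eq_or_lt_of_le hac with h' | h'
      · exact absurd ⟨h.symm, h.trans h'.symm⟩ hne
      · linarith
    · linarith
  nlinarith [mul_pos hst hst, mul_nonneg (sub_nonneg.2 hab) (sub_nonneg.2 hac),
    mul_nonneg (by linarith : (0:ℝ) ≤ b + c - a) (sub_nonneg.2 hab),
    mul_nonneg (by linarith : (0:ℝ) ≤ b + c - a) (sub_nonneg.2 hac)]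

section helpers
variable {E : Type*} [NormedAddCommGroup E] [InnerProductSpace ℝ E]

lemma le_of_sq_le_sq'' {x y : ℝ} (hx : 0 ≤ x) (hy : 0 ≤ y) (h : x ^ 2 ≤ y ^ 2) : x ≤ y := by
  by_contra hc
  push_neg at hc
  nlinarith

lemma lt_of_sq_lt_sq'' {x y : ℝ} (hx : 0 ≤ x) (hy : 0 ≤ y) (h : x ^ 2 < y ^ 2) : x < y := by
  by_contra hc
  push_neg at hc
  nlinarith

lemma mul_max3_le {k x y z L : ℝ} (hx : k * x ≤ L) (hy : k * y ≤ L) (hz : k * z ≤ L) :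
    k * max x (max y z) ≤ L := by
  rcases max_cases x (max y z) with ⟨h, -⟩ | ⟨h, -⟩ <;> rw [h]
  · exact hx
  · rcases max_cases y z with ⟨h', -⟩ | ⟨h', -⟩ <;> rw [h']
    · exact hy
    · exact hz

lemma mul_max3_lt {k x y z L : ℝ} (hx : k * x < L) (hy : k * y < L) (hz : k * z < L) :
    k * max x (max y z) < L := by
  rcases max_cases x (max y z) with ⟨h, -⟩ | ⟨h, -⟩ <;> rw [h]
  · exact hx
  · rcases max_cases y z with ⟨h', -⟩ | ⟨h', -⟩ <;> rw [h']
    · exact hy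
    · exact hz

lemma sqrt3_lt_two : Real.sqrt 3 < 2 := by
  nlinarith [Real.sq_sqrt (by norm_num : (0:ℝ) ≤ 3), Real.sqrt_nonneg 3]

/-- The key bound: let `M` be the midpoint of the longest side `YZ`. Then
`2√3 · dist M V ≤ perimeter` for each vertex `V`, strictly if not equilateral. -/
lemma main_bound (X Y Z : E) (h1 : dist Z X ≤ dist Y Z) (h2 : dist X Y ≤ dist Y Z)
    (hpos : 0 < dist Y Z) :
    (2 * Real.sqrt 3 * dist (midpoint ℝ Y Z) X ≤ dist X Y + dist Y Z + dist Z X ∧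
     2 * Real.sqrt 3 * dist (midpoint ℝ Y Z) Y ≤ dist X Y + dist Y Z + dist Z X ∧
     2 * Real.sqrt 3 * dist (midpoint ℝ Y Z) Z ≤ dist X Y + dist Y Z + dist Z X) ∧
    (¬(dist Y Z = dist Z X ∧ dist Z X = dist X Y) →
     (2 * Real.sqrt 3 * dist (midpoint ℝ Y Z) X < dist X Y + dist Y Z + dist Z X ∧
      2 * Real.sqrt 3 * dist (midpoint ℝ Y Z) Y < dist X Y + dist Y Z + dist Z X ∧
      2 * Real.sqrt 3 * dist (midpoint ℝ Y Z) Z < dist X Y + dist Y Z + dist Z X)) := by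
  set M := midpoint ℝ Y Z with hM
  set a := dist Y Z
  set b := dist Z X
  set c := dist X Y
  have hs3 : (Real.sqrt 3) ^ 2 = 3 := Real.sq_sqrt (by norm_num)
  have hs3nn : 0 ≤ Real.sqrt 3 := Real.sqrt_nonneg 3
  have hbnn : 0 ≤ b := dist_nonneg
  have hcnn : 0 ≤ c := dist_nonneg
  have htri : a ≤ b + c := by
    calc a ≤ dist Y X + dist X Z := dist_triangle Y X Z
      _ = b + c := by rw [dist_comm Y X, dist_comm X Z]; ring
  have hMY : dist M Y = a / 2 := by
    rw [hM, dist_midpoint_left, Real.norm_ofNat]; ring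
  have hMZ : dist M Z = a / 2 := by
    rw [hM, dist_midpoint_right, Real.norm_ofNat]; ring
  have hMXsq : 4 * dist M X ^ 2 = 2 * c ^ 2 + 2 * b ^ 2 - a ^ 2 := by
    rw [dist_comm M X]
    have := median_sq X Y Z
    rw [dist_comm X Z] at this
    linarith
  -- nonstrict bound for the median
  have hXsq : (2 * Real.sqrt 3 * dist M X) ^ 2 ≤ (c + a + b) ^ 2 := by
    have halg := alg_le a b c hbnn hcnn h1 h2 htri
    calc (2 * Real.sqrt 3 * dist M X) ^ 2 = 3 * (4 * dist M X ^ 2) := by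
          rw [mul_pow, mul_pow, hs3]; ring
      _ = 3 * (2 * b ^ 2 + 2 * c ^ 2 - a ^ 2) := by rw [hMXsq]; ring
      _ ≤ (a + b + c) ^ 2 := halg
      _ = (c + a + b) ^ 2 := by ring
  have hXnn : 0 ≤ 2 * Real.sqrt 3 * dist M X := by positivity
  have hPnn : 0 ≤ c + a + b := by positivity
  have hX : 2 * Real.sqrt 3 * dist M X ≤ c + a + b := le_of_sq_le_sq'' hXnn hPnn hXsq
  have hY : 2 * Real.sqrt 3 * dist M Y ≤ c + a + b := by
    rw [hMY]
    have : Real.sqrt 3 * a ≤ 2 * a := by nlinarith [sqrt3_lt_two, hpos.le]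
    linarith
  have hYstrict : 2 * Real.sqrt 3 * dist M Y < c + a + b := by
    rw [hMY]
    have : Real.sqrt 3 * a < 2 * a := by nlinarith [sqrt3_lt_two]
    linarith
  have hZ : dist M Z = dist M Y := by rw [hMY, hMZ]
  refine ⟨⟨hX, hY, by rw [hZ]; exact hY⟩, fun hne => ?_⟩
  have hXstrict : 2 * Real.sqrt 3 * dist M X < c + a + b := by
    have halg := alg_lt a b c hbnn hcnn h1 h2 htri hne
    apply lt_of_sq_lt_sq'' hXnn hPnn
    calc (2 * Real.sqrt 3 * dist M X) ^ 2 = 3 * (2 * b ^ 2 + 2 * c ^ 2 - a ^ 2) := by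
          rw [mul_pow, mul_pow, hs3]; nlinarith [hMXsq]
      _ < (a + b + c) ^ 2 := halg
      _ = (c + a + b) ^ 2 := by ring
  exact ⟨hXstrict, hYstrict, by rw [hZ]; exact hYstrict⟩

end helpers
set_option maxHeartbeats 1000000 in
/-- For every (nondegenerate) triangle with vertices `A, B, C` in the plane,
the perimeter `L` and the minimax invariant `δ` of the boundary satisfy
`L ≥ 2√3 · δ`, with equality iff the triangle is equilateral. -/
theorem triangle_perimeter_ge_delta
    (A B C : EuclideanSpace ℝ (Fin 2))
    (hABC : ¬ Collinear ℝ ({A, B, C} : Set (EuclideanSpace ℝ (Fin 2))))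
    (Γ : Set (EuclideanSpace ℝ (Fin 2)))
    (hΓ : Γ = segment ℝ A B ∪ segment ℝ B C ∪ segment ℝ C A)
    (L δ : ℝ) (hL : L = dist A B + dist B C + dist C A)
    (hδ : δ = ⨅ p : Γ, ⨆ q : Γ, dist (p : EuclideanSpace ℝ (Fin 2)) (q : EuclideanSpace ℝ (Fin 2))) :
    L ≥ 2 * Real.sqrt 3 * δ ∧
      (L = 2 * Real.sqrt 3 * δ ↔ (dist A B = dist B C ∧ dist B C = dist C A)) := by
  -- distinctness of vertices
  have hAB : A ≠ B := by
    rintro rfl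
    exact hABC ((collinear_pair ℝ A C).subset (by intro x hx; simp at hx ⊢; tauto))
  have hBC : B ≠ C := by
    rintro rfl
    exact hABC ((collinear_pair ℝ A B).subset (by intro x hx; simp at hx ⊢; tauto))
  have hCA : C ≠ A := by
    rintro rfl
    exact hABC ((collinear_pair ℝ C B).subset (by intro x hx; simp at hx ⊢; tauto))
  have hABpos : 0 < dist A B := dist_pos.2 hAB
  have hBCpos : 0 < dist B C := dist_pos.2 hBC
  have hCApos : 0 < dist C A := dist_pos.2 hCA
  have hs3nn : 0 ≤ Real.sqrt 3 := Real.sqrt_nonneg 3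
  have hs3 : (Real.sqrt 3) ^ 2 = 3 := Real.sq_sqrt (by norm_num)
  -- membership facts
  have hAΓ : A ∈ Γ := by rw [hΓ]; exact Or.inl (Or.inl (left_mem_segment ℝ A B))
  have hBΓ : B ∈ Γ := by rw [hΓ]; exact Or.inl (Or.inl (right_mem_segment ℝ A B))
  have hCΓ : C ∈ Γ := by rw [hΓ]; exact Or.inl (Or.inr (right_mem_segment ℝ B C))
  haveI : Nonempty Γ := ⟨⟨A, hAΓ⟩⟩
  -- the "farthest vertex" function
  set K : EuclideanSpace ℝ (Fin 2) → ℝ :=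
    fun p => max (dist p A) (max (dist p B) (dist p C)) with hK
  have hKbound : ∀ p q, q ∈ Γ → dist p q ≤ K p := by
    intro p q hq
    rw [hΓ] at hq
    rcases hq with (h | h) | h
    · exact le_trans (seg_dist_le p A B q h)
        (max_le (le_max_left _ _)
          (le_trans (le_max_left (dist p B) (dist p C)) (le_max_right _ _)))
    · exact le_trans (seg_dist_le p B C q h)
        (max_le (le_trans (le_max_left (dist p B) (dist p C)) (le_max_right _ _))
          (le_trans (le_max_right (dist p B) (dist p C)) (le_max_right _ _)))
    · exact le_trans (seg_dist_le p C A q h)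
        (max_le (le_trans (le_max_right (dist p B) (dist p C)) (le_max_right _ _))
          (le_max_left _ _))
  have hBdd : ∀ p : EuclideanSpace ℝ (Fin 2),
      BddAbove (Set.range fun q : Γ => dist p (q : EuclideanSpace ℝ (Fin 2))) := by
    intro p
    refine ⟨K p, ?_⟩
    rintro x ⟨q, rfl⟩
    exact hKbound p q q.2
  have hbb : BddBelow (Set.range fun p : Γ =>
      ⨆ q : Γ, dist (p : EuclideanSpace ℝ (Fin 2)) (q : EuclideanSpace ℝ (Fin 2))) := by
    refine ⟨0, ?_⟩
    rintro x ⟨r, rfl⟩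
    exact Real.iSup_nonneg fun q => dist_nonneg
  -- δ is at most K p for every p ∈ Γ
  have hδle : ∀ p, p ∈ Γ → δ ≤ K p := by
    intro p hp
    have h1 : δ ≤ ⨆ q : Γ, dist (p : EuclideanSpace ℝ (Fin 2)) (q : EuclideanSpace ℝ (Fin 2)) := by
      rw [hδ]
      exact ciInf_le hbb ⟨p, hp⟩
    exact le_trans h1 (ciSup_le fun q => hKbound p q q.2)
  -- distance to any vertex is at most the sup
  have hsupge : ∀ p : Γ, ∀ V, V ∈ Γ →
      dist (p : EuclideanSpace ℝ (Fin 2)) V ≤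
        ⨆ q : Γ, dist (p : EuclideanSpace ℝ (Fin 2)) (q : EuclideanSpace ℝ (Fin 2)) :=
    fun p V hV => le_ciSup (hBdd p) ⟨V, hV⟩
  -- the main upper bound via the midpoint of the longest side
  have hub : 2 * Real.sqrt 3 * δ ≤ L ∧
      (¬(dist A B = dist B C ∧ dist B C = dist C A) → 2 * Real.sqrt 3 * δ < L) := by
    have habs : ∀ M : EuclideanSpace ℝ (Fin 2), M ∈ Γ →
        (2 * Real.sqrt 3 * dist M A ≤ L ∧ 2 * Real.sqrt 3 * dist M B ≤ L ∧
          2 * Real.sqrt 3 * dist M C ≤ L) → 2 * Real.sqrt 3 * δ ≤ L := by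
      intro M hM ⟨h₁, h₂, h₃⟩
      have hδK := hδle M hM
      have : 2 * Real.sqrt 3 * δ ≤ 2 * Real.sqrt 3 * K M :=
        mul_le_mul_of_nonneg_left hδK (by positivity)
      exact le_trans this (mul_max3_le h₁ h₂ h₃)
    have habs' : ∀ M : EuclideanSpace ℝ (Fin 2), M ∈ Γ →
        (2 * Real.sqrt 3 * dist M A < L ∧ 2 * Real.sqrt 3 * dist M B < L ∧
          2 * Real.sqrt 3 * dist M C < L) → 2 * Real.sqrt 3 * δ < L := by
      intro M hM ⟨h₁, h₂, h₃⟩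
      have hδK := hδle M hM
      have : 2 * Real.sqrt 3 * δ ≤ 2 * Real.sqrt 3 * K M :=
        mul_le_mul_of_nonneg_left hδK (by positivity)
      exact lt_of_le_of_lt this (mul_max3_lt h₁ h₂ h₃)
    rcases le_total (dist C A) (dist B C) with h1 | h1
    · rcases le_total (dist A B) (dist B C) with h2 | h2
      · -- BC is the longest side
        obtain ⟨⟨bX, bY, bZ⟩, hstrict⟩ := main_bound A B C h1 h2 hBCpos
        have hMΓ : midpoint ℝ B C ∈ Γ := by
          rw [hΓ]; exact Or.inl (Or.inr (midpoint_mem_segment B C))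
        refine ⟨habs _ hMΓ ⟨by rw [hL]; linarith, by rw [hL]; linarith, by rw [hL]; linarith⟩,
          fun hne => ?_⟩
        have hne' : ¬(dist B C = dist C A ∧ dist C A = dist A B) := by
          rintro ⟨u, v⟩; exact hne ⟨v.symm.trans u.symm, u⟩
        obtain ⟨sX, sY, sZ⟩ := hstrict hne'
        exact habs' _ hMΓ ⟨by rw [hL]; linarith, by rw [hL]; linarith, by rw [hL]; linarith⟩
      · -- AB is the longest side
        obtain ⟨⟨bX, bY, bZ⟩, hstrict⟩ := main_bound C A B h2 (h1.trans h2) hABpos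
        have hMΓ : midpoint ℝ A B ∈ Γ := by
          rw [hΓ]; exact Or.inl (Or.inl (midpoint_mem_segment A B))
        refine ⟨habs _ hMΓ ⟨by rw [hL]; linarith, by rw [hL]; linarith, by rw [hL]; linarith⟩,
          fun hne => ?_⟩
        obtain ⟨sX, sY, sZ⟩ := hstrict hne
        exact habs' _ hMΓ ⟨by rw [hL]; linarith, by rw [hL]; linarith, by rw [hL]; linarith⟩
    · rcases le_total (dist A B) (dist C A) with h2 | h2
      · -- CA is the longest side
        obtain ⟨⟨bX, bY, bZ⟩, hstrict⟩ := main_bound B C A h2 h1 hCApos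
        have hMΓ : midpoint ℝ C A ∈ Γ := by
          rw [hΓ]; exact Or.inr (midpoint_mem_segment C A)
        refine ⟨habs _ hMΓ ⟨by rw [hL]; linarith, by rw [hL]; linarith, by rw [hL]; linarith⟩,
          fun hne => ?_⟩
        have hne' : ¬(dist C A = dist A B ∧ dist A B = dist B C) := by
          rintro ⟨u, v⟩; exact hne ⟨v, v.symm.trans u.symm⟩
        obtain ⟨sX, sY, sZ⟩ := hstrict hne'
        exact habs' _ hMΓ ⟨by rw [hL]; linarith, by rw [hL]; linarith, by rw [hL]; linarith⟩
      · -- AB is the longest side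
        obtain ⟨⟨bX, bY, bZ⟩, hstrict⟩ := main_bound C A B (h1.trans h2) h2 hABpos
        have hMΓ : midpoint ℝ A B ∈ Γ := by
          rw [hΓ]; exact Or.inl (Or.inl (midpoint_mem_segment A B))
        refine ⟨habs _ hMΓ ⟨by rw [hL]; linarith, by rw [hL]; linarith, by rw [hL]; linarith⟩,
          fun hne => ?_⟩
        obtain ⟨sX, sY, sZ⟩ := hstrict hne
        exact habs' _ hMΓ ⟨by rw [hL]; linarith, by rw [hL]; linarith, by rw [hL]; linarith⟩
  refine ⟨hub.1, ?_, ?_⟩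
  · -- equality implies equilateral
    intro heq
    by_contra hne
    have := hub.2 hne
    linarith
  · -- equilateral implies equality
    rintro ⟨u, v⟩
    set d := dist A B with hd
    have hdAB : dist A B = d := rfl
    have hdBC : dist B C = d := u.symm
    have hdCA : dist C A = d := (u.trans v).symm
    have hLd : L = 3 * d := by rw [hL]; linarith
    have hlow : ∀ p : Γ, Real.sqrt 3 / 2 * d ≤
        ⨆ q : Γ, dist (p : EuclideanSpace ℝ (Fin 2)) (q : EuclideanSpace ℝ (Fin 2)) := by
      rintro ⟨x, hx⟩
      have hx' : x ∈ segment ℝ A B ∪ segment ℝ B C ∪ segment ℝ C A := by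
        rw [← hΓ]; exact hx
      rcases hx' with (h | h) | h
      · exact le_trans (equilateral_opp A B C d hdAB hdBC hdCA _ h) (hsupge ⟨x, hx⟩ C hCΓ)
      · exact le_trans (equilateral_opp B C A d hdBC hdCA hdAB _ h) (hsupge ⟨x, hx⟩ A hAΓ)
      · exact le_trans (equilateral_opp C A B d hdCA hdAB hdBC _ h) (hsupge ⟨x, hx⟩ B hBΓ)
    have hδge : Real.sqrt 3 / 2 * d ≤ δ := by
      rw [hδ]
      exact le_ciInf hlow
    have hmul : 2 * Real.sqrt 3 * (Real.sqrt 3 / 2 * d) = 3 * d := by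
      linear_combination d * hs3
    have hge : 3 * d ≤ 2 * Real.sqrt 3 * δ := by
      calc 3 * d = 2 * Real.sqrt 3 * (Real.sqrt 3 / 2 * d) := hmul.symm
        _ ≤ 2 * Real.sqrt 3 * δ := mul_le_mul_of_nonneg_left hδge (by positivity)
    have := hub.1
    linarith [hLd]
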